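/- Let H be a complex Hilbert space and X, Y, Z, W : H → H bounded linear operators. Let T be the operator matrix on H ⊕ H given by T(x₁, x₂) = (X x₁ + Y x₂, Z x₁ + W x₂), and set S = Y*Y + ZZ*. Then w(T) ≥ max{w(X), w(W), ((1/16)‖S‖² + (1/4)c(ZY)² + (1/8)m(ZYS + S(ZY)))^{1/4}}. -/

import Mathlib

noncomputable def numRadius {H : Type*} [NormedAddCommGroup H] [InnerProductSpace ℂ H]
    (T : H →L[ℂ] H) : ℝ :=
  sSup {r : ℝ | ∃ x : H, ‖x‖ = 1 ∧ r = ‖(inner ℂ (T x) x : ℂ)‖}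

noncomputable def crawford {H : Type*} [NormedAddCommGroup H] [InnerProductSpace ℂ H]
    (T : H →L[ℂ] H) : ℝ :=
  sInf {r : ℝ | ∃ x : H, ‖x‖ = 1 ∧ r = ‖(inner ℂ (T x) x : ℂ)‖}

noncomputable def reOp {H : Type*} [NormedAddCommGroup H] [InnerProductSpace ℂ H]
    [CompleteSpace H] (A : H →L[ℂ] H) : H →L[ℂ] H :=
  (2 : ℂ)⁻¹ • (A + ContinuousLinearMap.adjoint A)

noncomputable def cNum {H : Type*} [NormedAddCommGroup H] [InnerProductSpace ℂ H]
    [CompleteSpace H] (T : H →L[ℂ] H) : ℝ :=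
  ⨅ θ : ℝ, sInf {r : ℝ | ∃ x : H, ‖x‖ = 1 ∧ r = ‖reOp (Complex.exp (θ * Complex.I) • T) x‖}

section Aux

open ContinuousLinearMap ComplexConjugate
open scoped InnerProductSpace

variable {E : Type*} [NormedAddCommGroup E] [InnerProductSpace ℂ E]

lemma aux_opnorm_le_of_unit {F : Type*} [NormedAddCommGroup F] [NormedSpace ℂ F]
    (A : E →L[ℂ] F) {M : ℝ} (hM : 0 ≤ M) (h : ∀ x : E, ‖x‖ = 1 → ‖A x‖ ≤ M) : ‖A‖ ≤ M := by
  refine A.opNorm_le_bound hM fun x => ?_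
  rcases eq_or_ne x 0 with rfl | hx
  · simp
  · have hn : ‖x‖ ≠ 0 := norm_ne_zero_iff.mpr hx
    have hu : ‖(‖x‖⁻¹ • x : E)‖ = 1 := norm_smul_inv_norm hx
    have h1 := h _ hu
    rw [← Complex.coe_smul, map_smul, norm_smul] at h1
    simp only [Complex.norm_real, norm_inv, norm_norm] at h1
    have hp : (0:ℝ) < ‖x‖ := lt_of_le_of_ne (norm_nonneg x) (Ne.symm hn)
    calc ‖A x‖ = ‖x‖ * (‖x‖⁻¹ * ‖A x‖) := by field_simp
    _ ≤ ‖x‖ * M := by nlinarith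
    _ = M * ‖x‖ := mul_comm _ _

lemma aux_inner_bound_of_unit (A : E →L[ℂ] E) {M : ℝ}
    (h : ∀ x : E, ‖x‖ = 1 → ‖(inner ℂ (A x) x : ℂ)‖ ≤ M) :
    ∀ x : E, ‖(inner ℂ (A x) x : ℂ)‖ ≤ M * ‖x‖ ^ 2 := by
  intro x
  rcases eq_or_ne x 0 with rfl | hx
  · simp
  · have hn : ‖x‖ ≠ 0 := norm_ne_zero_iff.mpr hx
    have hp : (0:ℝ) < ‖x‖ := lt_of_le_of_ne (norm_nonneg x) (Ne.symm hn)
    have hu : ‖(‖x‖⁻¹ • x : E)‖ = 1 := norm_smul_inv_norm hx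
    have h1 := h _ hu
    rw [← Complex.coe_smul, map_smul, inner_smul_left, inner_smul_right, norm_mul, norm_mul] at h1
    simp only [RCLike.norm_conj, Complex.norm_real, norm_inv, norm_norm] at h1
    calc ‖(inner ℂ (A x) x : ℂ)‖ = ‖x‖^2 * (‖x‖⁻¹ * (‖x‖⁻¹ * ‖(inner ℂ (A x) x : ℂ)‖)) := by
          field_simp
    _ ≤ ‖x‖^2 * M := by nlinarith [sq_nonneg ‖x‖, norm_nonneg (inner ℂ (A x) x : ℂ)]
    _ = M * ‖x‖^2 := mul_comm _ _

lemma aux_selfadj_norm_le [CompleteSpace E] {A : E →L[ℂ] E} (hA : IsSelfAdjoint A) {M : ℝ}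
    (hM : 0 ≤ M) (h : ∀ x : E, ‖x‖ = 1 → ‖(inner ℂ (A x) x : ℂ)‖ ≤ M) : ‖A‖ ≤ M := by
  have hAadj : ContinuousLinearMap.adjoint A = A := hA.adjoint_eq
  have hq := aux_inner_bound_of_unit A h
  have hre : ∀ u v : E, Complex.re (inner ℂ (A u) v : ℂ) ≤ M / 2 * (‖u‖ ^ 2 + ‖v‖ ^ 2) := by
    intro u v
    have hsym : (inner ℂ (A v) u : ℂ) = conj (inner ℂ (A u) v : ℂ) := by
      calc (inner ℂ (A v) u : ℂ) = inner ℂ ((ContinuousLinearMap.adjoint A) v) u := by rw [hAadj]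
      _ = inner ℂ v (A u) := adjoint_inner_left A u v
      _ = conj (inner ℂ (A u) v : ℂ) := (inner_conj_symm _ _).symm
    have e1 : (inner ℂ (A (u + v)) (u + v) : ℂ) - inner ℂ (A (u - v)) (u - v)
        = 2 * (inner ℂ (A u) v + conj (inner ℂ (A u) v : ℂ)) := by
      simp only [map_add, map_sub, inner_add_left, inner_add_right, inner_sub_left,
        inner_sub_right, hsym]
      ring
    have e2 : Complex.re ((inner ℂ (A (u+v)) (u+v) : ℂ) - inner ℂ (A (u-v)) (u-v))
        = 4 * Complex.re (inner ℂ (A u) v : ℂ) := by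
      rw [e1]
      simp only [Complex.mul_re, Complex.add_re, Complex.add_im, Complex.conj_re,
        Complex.conj_im, Complex.re_ofNat, Complex.im_ofNat]
      ring
    have b1 : Complex.re (inner ℂ (A (u+v)) (u+v) : ℂ) ≤ M * ‖u + v‖^2 := by
      refine le_trans ?_ (hq (u+v))
      exact Complex.re_le_norm _
    have b2 : -Complex.re (inner ℂ (A (u-v)) (u-v) : ℂ) ≤ M * ‖u - v‖^2 := by
      have habs : |Complex.re (inner ℂ (A (u-v)) (u-v) : ℂ)| ≤ ‖(inner ℂ (A (u-v)) (u-v) : ℂ)‖ := by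
        exact Complex.abs_re_le_norm _
      have := habs.trans (hq (u-v))
      exact (neg_le_abs _).trans this
    have hpar := parallelogram_law_with_norm ℂ u v
    have h4 : 4 * Complex.re (inner ℂ (A u) v : ℂ) ≤ M * (‖u+v‖^2 + ‖u-v‖^2) := by
      rw [← e2, Complex.sub_re]; linarith
    have hpar' : ‖u+v‖^2 + ‖u-v‖^2 = 2*(‖u‖^2 + ‖v‖^2) := by
      exact hpar
    rw [hpar'] at h4; linarith
  refine aux_opnorm_le_of_unit A hM fun u hu => ?_
  rcases eq_or_ne (A u) 0 with h0 | h0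
  · simp [h0, hM]
  · have hvn : ‖(‖A u‖⁻¹ • A u : E)‖ = 1 := norm_smul_inv_norm h0
    have hip : (inner ℂ (A u) (‖A u‖⁻¹ • A u) : ℂ) = (‖A u‖ : ℂ) := by
      rw [← Complex.coe_smul, inner_smul_right, inner_self_eq_norm_sq_to_K]
      have hz : (‖A u‖ : ℂ) ≠ 0 := by exact_mod_cast norm_ne_zero_iff.mpr h0
      field_simp; rw [Complex.ofReal_div, Complex.ofReal_one, div_mul_eq_mul_div, one_mul, pow_two]; exact mul_self_div_self _
    have h' := hre u (‖A u‖⁻¹ • A u)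
    rw [hip] at h'
    simp only [hu, hvn, Complex.ofReal_re, one_pow] at h'
    linarith

lemma le_numRadius (T : E →L[ℂ] E) {x : E} (hx : ‖x‖ = 1) :
    ‖(inner ℂ (T x) x : ℂ)‖ ≤ numRadius T := by
  apply le_csSup
  · refine ⟨‖T‖, ?_⟩
    rintro r ⟨y, hy, rfl⟩
    calc ‖(inner ℂ (T y) y : ℂ)‖ ≤ ‖T y‖ * ‖y‖ := norm_inner_le_norm _ _
    _ ≤ ‖T‖ * ‖y‖ * ‖y‖ := by gcongr; exact T.le_opNorm y
    _ = ‖T‖ := by rw [hy]; ring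
  · exact ⟨x, hx, rfl⟩

lemma numRadius_nonneg (T : E →L[ℂ] E) : 0 ≤ numRadius T :=
  Real.sSup_nonneg (by rintro r ⟨y, hy, rfl⟩; positivity)

lemma crawford_le (T : E →L[ℂ] E) {x : E} (hx : ‖x‖ = 1) :
    crawford T ≤ ‖(inner ℂ (T x) x : ℂ)‖ :=
  csInf_le ⟨0, by rintro r ⟨y, hy, rfl⟩; positivity⟩ ⟨x, hx, rfl⟩

lemma crawford_nonneg (T : E →L[ℂ] E) : 0 ≤ crawford T :=
  Real.sInf_nonneg (by rintro r ⟨y, hy, rfl⟩; positivity)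

variable [CompleteSpace E]

lemma reOp_isSelfAdjoint (A : E →L[ℂ] E) : IsSelfAdjoint (reOp A) := by
  rw [IsSelfAdjoint, reOp, star_smul, star_add, star_eq_adjoint, star_eq_adjoint,
    adjoint_adjoint]
  rw [show star ((2:ℂ)⁻¹) = (2:ℂ)⁻¹ by simp [Complex.ext_iff]]
  rw [add_comm]

lemma reOp_apply (A : E →L[ℂ] E) (x : E) :
    reOp A x = (2:ℂ)⁻¹ • (A x + ContinuousLinearMap.adjoint A x) := by
  simp [reOp]

lemma adjoint_smul' (c : ℂ) (A : E →L[ℂ] E) :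
    ContinuousLinearMap.adjoint (c • A) = conj c • ContinuousLinearMap.adjoint A := by
  rw [← star_eq_adjoint, ← star_eq_adjoint, star_smul]
  rfl

lemma cNum_nonneg (T : E →L[ℂ] E) : 0 ≤ cNum T :=
  Real.iInf_nonneg fun _ => Real.sInf_nonneg (by rintro r ⟨y, hy, rfl⟩; positivity)

lemma cNum_le (T : E →L[ℂ] E) (θ : ℝ) {x : E} (hx : ‖x‖ = 1) :
    cNum T ≤ ‖reOp (Complex.exp (θ * Complex.I) • T) x‖ := by
  refine le_trans (ciInf_le ⟨0, ?_⟩ θ) (csInf_le ⟨0, ?_⟩ ⟨x, hx, rfl⟩)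
  · rintro r ⟨θ', rfl⟩
    exact Real.sInf_nonneg (by rintro r ⟨y, hy, rfl⟩; positivity)
  · rintro r ⟨y, hy, rfl⟩; positivity

noncomputable def offDiag (Y Z : E →L[ℂ] E) : WithLp 2 (E × E) →L[ℂ] WithLp 2 (E × E) :=
  ((WithLp.prodContinuousLinearEquiv 2 ℂ E E).symm.toContinuousLinearMap.comp
    (((Y.comp (ContinuousLinearMap.snd ℂ E E)).prod
      (Z.comp (ContinuousLinearMap.fst ℂ E E))))).comp
    (WithLp.prodContinuousLinearEquiv 2 ℂ E E).toContinuousLinearMap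

lemma offDiag_apply (Y Z : E →L[ℂ] E) (ξ : WithLp 2 (E × E)) :
    offDiag Y Z ξ = (WithLp.equiv 2 (E × E)).symm (Y ξ.snd, Z ξ.fst) := rfl

lemma offDiag_adjoint (Y Z : E →L[ℂ] E) :
    ContinuousLinearMap.adjoint (offDiag Y Z)
      = offDiag (ContinuousLinearMap.adjoint Z) (ContinuousLinearMap.adjoint Y) := by
  symm
  rw [ContinuousLinearMap.eq_adjoint_iff]
  intro ξ η
  rw [offDiag_apply, offDiag_apply, WithLp.prod_inner_apply, WithLp.prod_inner_apply]
  simp only [WithLp.equiv_symm_apply, WithLp.ofLp_toLp, WithLp.ofLp_fst, WithLp.ofLp_snd]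
  rw [adjoint_inner_left, adjoint_inner_left]
  ring

end Aux
open ContinuousLinearMap ComplexConjugate
open scoped InnerProductSpace

set_option maxHeartbeats 1000000 in
theorem numRadius_operator_matrix_lower
    {H : Type*} [NormedAddCommGroup H] [InnerProductSpace ℂ H] [CompleteSpace H]
    (X Y Z W : H →L[ℂ] H)
    (T : WithLp 2 (H × H) →L[ℂ] WithLp 2 (H × H))
    (hT : ∀ x : WithLp 2 (H × H),
      WithLp.equiv 2 (H × H) (T x) =
        (X (WithLp.equiv 2 (H × H) x).1 + Y (WithLp.equiv 2 (H × H) x).2,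
         Z (WithLp.equiv 2 (H × H) x).1 + W (WithLp.equiv 2 (H × H) x).2))
    (S : H →L[ℂ] H)
    (hS : S = (ContinuousLinearMap.adjoint Y).comp Y + Z.comp (ContinuousLinearMap.adjoint Z)) :
    numRadius T ≥ max (max (numRadius X) (numRadius W))
      (((1 / 16 : ℝ) * ‖S‖ ^ 2 + (1 / 4 : ℝ) * (cNum (Z.comp Y)) ^ 2
        + (1 / 8 : ℝ) * crawford ((Z.comp Y).comp S + S.comp (Z.comp Y))) ^ ((1 : ℝ) / 4)) := by
  classical
  by_cases hH : ∃ x : H, ‖x‖ = 1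
  · obtain ⟨x₀, hx₀⟩ := hH
    have hw0 : 0 ≤ numRadius T := numRadius_nonneg T
    have hTfst : ∀ ξ : WithLp 2 (H × H), (T ξ).fst = X ξ.fst + Y ξ.snd := fun ξ => by
      have h := congrArg Prod.fst (hT ξ)
      exact h
    have hTsnd : ∀ ξ : WithLp 2 (H × H), (T ξ).snd = Z ξ.fst + W ξ.snd := fun ξ => by
      have h := congrArg Prod.snd (hT ξ)
      exact h
    have hwX : numRadius X ≤ numRadius T := by
      refine Real.sSup_le ?_ hw0
      rintro r ⟨x, hx, rfl⟩
      have hξ : ‖(WithLp.equiv 2 (H × H)).symm (x, (0:H))‖ = 1 := by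
        rw [WithLp.equiv_symm_apply, WithLp.norm_toLp_fst]; exact hx
      have hval : (inner ℂ (T ((WithLp.equiv 2 (H × H)).symm (x, 0)))
          ((WithLp.equiv 2 (H × H)).symm (x, 0)) : ℂ) = inner ℂ (X x) x := by
        rw [WithLp.prod_inner_apply]
        simp only [WithLp.ofLp_fst, WithLp.ofLp_snd]
        rw [hTfst, hTsnd]
        simp
      calc ‖(inner ℂ (X x) x : ℂ)‖ = ‖(inner ℂ (T ((WithLp.equiv 2 (H × H)).symm (x, 0)))
            ((WithLp.equiv 2 (H × H)).symm (x, 0)) : ℂ)‖ := by rw [hval]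
      _ ≤ numRadius T := le_numRadius T hξ
    have hwW : numRadius W ≤ numRadius T := by
      refine Real.sSup_le ?_ hw0
      rintro r ⟨x, hx, rfl⟩
      have hξ : ‖(WithLp.equiv 2 (H × H)).symm ((0:H), x)‖ = 1 := by
        rw [WithLp.equiv_symm_apply, WithLp.norm_toLp_snd]; exact hx
      have hval : (inner ℂ (T ((WithLp.equiv 2 (H × H)).symm (0, x)))
          ((WithLp.equiv 2 (H × H)).symm (0, x)) : ℂ) = inner ℂ (W x) x := by
        rw [WithLp.prod_inner_apply]
        simp only [WithLp.ofLp_fst, WithLp.ofLp_snd]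
        rw [hTfst, hTsnd]
        simp
      calc ‖(inner ℂ (W x) x : ℂ)‖ = ‖(inner ℂ (T ((WithLp.equiv 2 (H × H)).symm (0, x)))
            ((WithLp.equiv 2 (H × H)).symm (0, x)) : ℂ)‖ := by rw [hval]
      _ ≤ numRadius T := le_numRadius T hξ
    -- off-diagonal bound
    have hoff : ∀ ξ : WithLp 2 (H × H), ‖ξ‖ = 1 →
        ‖(inner ℂ (offDiag Y Z ξ) ξ : ℂ)‖ ≤ numRadius T := by
      intro ξ hξ
      have hξ'1 : ((WithLp.equiv 2 (H × H)).symm (ξ.fst, -ξ.snd)).fst = ξ.fst :=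
        rfl
      have hξ'2 : ((WithLp.equiv 2 (H × H)).symm (ξ.fst, -ξ.snd)).snd = -ξ.snd :=
        rfl
      have hnξ' : ‖(WithLp.equiv 2 (H × H)).symm (ξ.fst, -ξ.snd)‖ = 1 := by
        have h2 : ‖(WithLp.equiv 2 (H × H)).symm (ξ.fst, -ξ.snd)‖^2 = ‖ξ‖^2 := by
          rw [WithLp.prod_norm_sq_eq_of_L2, WithLp.prod_norm_sq_eq_of_L2, hξ'1, hξ'2, norm_neg]
        rw [← Real.sqrt_sq (norm_nonneg _), h2, Real.sqrt_sq (norm_nonneg ξ), hξ]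
      have hid : (inner ℂ (offDiag Y Z ξ) ξ : ℂ)
          = 2⁻¹ * ((inner ℂ (T ξ) ξ : ℂ)
            - inner ℂ (T ((WithLp.equiv 2 (H × H)).symm (ξ.fst, -ξ.snd)))
                ((WithLp.equiv 2 (H × H)).symm (ξ.fst, -ξ.snd))) := by
        rw [offDiag_apply, WithLp.prod_inner_apply, WithLp.prod_inner_apply,
          WithLp.prod_inner_apply]
        simp only [WithLp.ofLp_fst, WithLp.ofLp_snd]
        rw [hTfst ξ, hTsnd ξ, hTfst, hTsnd, hξ'1, hξ'2]
        simp only [WithLp.equiv_symm_apply, WithLp.toLp_fst, WithLp.toLp_snd, map_neg, inner_add_left,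
          inner_neg_left, inner_neg_right]
        ring
      rw [hid, norm_mul]
      have h1 := le_numRadius T hξ
      have h2 := le_numRadius T hnξ'
      have h3 : ‖(inner ℂ (T ξ) ξ : ℂ)
          - inner ℂ (T ((WithLp.equiv 2 (H × H)).symm (ξ.fst, -ξ.snd)))
              ((WithLp.equiv 2 (H × H)).symm (ξ.fst, -ξ.snd))‖ ≤ 2 * numRadius T :=
        (norm_sub_le _ _).trans (by linarith)
      have hn2 : ‖(2⁻¹ : ℂ)‖ = 2⁻¹ := by norm_num
      rw [hn2]
      nlinarith [norm_nonneg ((inner ℂ (T ξ) ξ : ℂ)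
        - inner ℂ (T ((WithLp.equiv 2 (H × H)).symm (ξ.fst, -ξ.snd)))
            ((WithLp.equiv 2 (H × H)).symm (ξ.fst, -ξ.snd)))]
    -- norm bound for the real parts
    have hB : ∀ θ : ℝ, ‖reOp (Complex.exp ((θ:ℝ) * Complex.I) • offDiag Y Z)‖ ≤ numRadius T := by
      intro θ
      refine aux_selfadj_norm_le (reOp_isSelfAdjoint _) hw0 fun ξ hξ => ?_
      set c : ℂ := Complex.exp ((θ:ℝ) * Complex.I) with hc
      have hlc : ‖c‖ = 1 := by
        rw [hc, Complex.norm_exp_ofReal_mul_I]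
      set z : ℂ := inner ℂ (offDiag Y Z ξ) ξ with hz
      have hval : (inner ℂ (reOp (c • offDiag Y Z) ξ) ξ : ℂ)
          = 2⁻¹ * (conj c * z + conj (conj c * z)) := by
        rw [reOp_apply, inner_smul_left, inner_add_left, ContinuousLinearMap.smul_apply,
          inner_smul_left, adjoint_smul', ContinuousLinearMap.smul_apply, inner_smul_left,
          adjoint_inner_left, ← inner_conj_symm ξ (offDiag Y Z ξ)]
        rw [show conj ((2:ℂ)⁻¹) = (2:ℂ)⁻¹ by simp [Complex.ext_iff]]
        simp only [map_mul, Complex.conj_conj, hz, inner_conj_symm]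
      rw [hval]
      have hreal : (2:ℂ)⁻¹ * (conj c * z + conj (conj c * z)) = (((conj c * z).re : ℝ) : ℂ) := by
        rw [Complex.add_conj]; push_cast; ring
      rw [hreal, Complex.norm_real, Real.norm_eq_abs]
      calc |(conj c * z).re| ≤ ‖conj c * z‖ := Complex.abs_re_le_norm _
      _ = ‖conj c * z‖ := rfl
      _ = ‖z‖ := by rw [norm_mul, RCLike.norm_conj, hlc, one_mul]
      _ ≤ numRadius T := hoff ξ hξ
    set P := Z.comp Y with hP
    set Q := P.comp S + S.comp P with hQ
    have hSsa : ContinuousLinearMap.adjoint S = S := by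
      rw [hS, map_add, ContinuousLinearMap.adjoint_comp, ContinuousLinearMap.adjoint_comp,
        ContinuousLinearMap.adjoint_adjoint, ContinuousLinearMap.adjoint_adjoint]
    have hPadj : ContinuousLinearMap.adjoint P
        = (ContinuousLinearMap.adjoint Y).comp (ContinuousLinearMap.adjoint Z) := by
      rw [hP, ContinuousLinearMap.adjoint_comp]
    have hmain : ∀ x : H, ‖x‖ = 1 →
        (1/16) * ‖S x‖^2 + (1/4) * (cNum P)^2 + (1/8) * crawford Q ≤ (numRadius T)^4 := by
      intro x hx
      set q : ℂ := inner ℂ (Q x) x with hq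
      set φ : ℝ := q.arg with hφ
      set c : ℂ := Complex.exp ((φ/2 : ℝ) * Complex.I) with hc
      have hc2 : c * c = Complex.exp ((φ:ℝ) * Complex.I) := by
        rw [hc, ← Complex.exp_add]; congr 1; push_cast; ring
      have hccbar : conj c * c = 1 := by
        rw [hc, ← Complex.exp_conj, ← Complex.exp_add]
        rw [show conj (((φ/2 : ℝ) : ℂ) * Complex.I) = -(((φ/2 : ℝ) : ℂ) * Complex.I) by
          rw [map_mul, Complex.conj_ofReal, Complex.conj_I]; ring]
        rw [neg_add_cancel, Complex.exp_zero]
      set B := reOp (c • offDiag Y Z) with hBdef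
      set K := reOp (Complex.exp ((φ:ℝ) * Complex.I) • P) with hKdef
      set u : H := (2:ℂ)⁻¹ • (c • Y x + conj c • (ContinuousLinearMap.adjoint Z) x) with hu
      set v : H := (2:ℂ)⁻¹ • (c • Z u + conj c • (ContinuousLinearMap.adjoint Y) u) with hv
      have hξ₀ : ‖(WithLp.equiv 2 (H × H)).symm ((0:H), x)‖ = 1 := by
        rw [WithLp.equiv_symm_apply, WithLp.norm_toLp_snd]; exact hx
      have hBξ₀ : B ((WithLp.equiv 2 (H × H)).symm ((0:H), x))
          = (WithLp.equiv 2 (H × H)).symm (u, 0) := by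
        rw [hBdef, reOp_apply, adjoint_smul', offDiag_adjoint,
          ContinuousLinearMap.smul_apply, ContinuousLinearMap.smul_apply,
          offDiag_apply, offDiag_apply]
        simp only [WithLp.equiv_symm_apply, WithLp.toLp_fst, WithLp.toLp_snd, map_zero]
        rw [← WithLp.toLp_smul, ← WithLp.toLp_smul, ← WithLp.toLp_add,
          ← WithLp.toLp_smul]
        congr 1
        rw [Prod.smul_mk, Prod.smul_mk, Prod.mk_add_mk, Prod.smul_mk, hu]
        simp
      have hB2ξ₀ : B (B ((WithLp.equiv 2 (H × H)).symm ((0:H), x)))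
          = (WithLp.equiv 2 (H × H)).symm (0, v) := by
        rw [hBξ₀, hBdef, reOp_apply, adjoint_smul', offDiag_adjoint,
          ContinuousLinearMap.smul_apply, ContinuousLinearMap.smul_apply,
          offDiag_apply, offDiag_apply]
        simp only [WithLp.equiv_symm_apply, WithLp.toLp_fst, WithLp.toLp_snd, map_zero]
        rw [← WithLp.toLp_smul, ← WithLp.toLp_smul, ← WithLp.toLp_add,
          ← WithLp.toLp_smul]
        congr 1
        rw [Prod.smul_mk, Prod.smul_mk, Prod.mk_add_mk, Prod.smul_mk, hv]
        simp
      have hventry : v = (4:ℂ)⁻¹ • S x + (2:ℂ)⁻¹ • K x := by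
        rw [hv, hu, hKdef, reOp_apply, adjoint_smul', ← hc2, hPadj, hS, hP]
        simp only [ContinuousLinearMap.smul_apply, ContinuousLinearMap.add_apply,
          ContinuousLinearMap.comp_apply, map_add, map_smul, smul_add, smul_smul, map_mul]
        match_scalars
        · ring
        · linear_combination (norm := ring_nf) ((2:ℂ)⁻¹*(2:ℂ)⁻¹) * hccbar
        · linear_combination (norm := ring_nf) ((2:ℂ)⁻¹*(2:ℂ)⁻¹) * hccbar
        · ring
      have hBw : ‖B‖ ≤ numRadius T := by rw [hBdef, hc]; exact hB (φ/2)
      have hnorm1 : ‖(4:ℂ)⁻¹ • S x + (2:ℂ)⁻¹ • K x‖ ≤ (numRadius T)^2 := by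
        have e1 : ‖B (B ((WithLp.equiv 2 (H × H)).symm ((0:H), x)))‖
            = ‖(4:ℂ)⁻¹ • S x + (2:ℂ)⁻¹ • K x‖ := by
          rw [hB2ξ₀, WithLp.equiv_symm_apply, WithLp.norm_toLp_snd, hventry]
        calc ‖(4:ℂ)⁻¹ • S x + (2:ℂ)⁻¹ • K x‖
            = ‖B (B ((WithLp.equiv 2 (H × H)).symm ((0:H), x)))‖ := e1.symm
        _ ≤ ‖B‖ * ‖B ((WithLp.equiv 2 (H × H)).symm ((0:H), x))‖ := B.le_opNorm _
        _ ≤ ‖B‖ * (‖B‖ * ‖(WithLp.equiv 2 (H × H)).symm ((0:H), x)‖) := by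
            gcongr; exact B.le_opNorm _
        _ = ‖B‖ * ‖B‖ := by rw [hξ₀, mul_one]
        _ ≤ numRadius T * numRadius T := by nlinarith [norm_nonneg B]
        _ = (numRadius T)^2 := (sq (numRadius T)).symm
      -- key inner ℂ product identity
      have hq' : q = inner ℂ ((P.comp S) x) x + inner ℂ ((S.comp P) x) x := by
        rw [hq, hQ, ContinuousLinearMap.add_apply, inner_add_left]
      have hKx : K x = (2:ℂ)⁻¹ • ((c*c) • P x
          + (conj c * conj c) • (ContinuousLinearMap.adjoint P) x) := by
        rw [hKdef, reOp_apply, adjoint_smul', ← hc2, map_mul,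
          ContinuousLinearMap.smul_apply, ContinuousLinearMap.smul_apply]
      have h1 : (inner ℂ (S x) (P x) : ℂ) = conj (inner ℂ ((S.comp P) x) x : ℂ) := by
        conv_lhs => rw [← hSsa]
        rw [ContinuousLinearMap.adjoint_inner_left, ← inner_conj_symm]
        simp [hP]
      have h2 : (inner ℂ (S x) ((ContinuousLinearMap.adjoint P) x) : ℂ)
          = inner ℂ ((P.comp S) x) x := by
        rw [ContinuousLinearMap.adjoint_inner_right]
        simp [hP]
      have hA : (inner ℂ (S x) (K x) : ℂ)
          = 2⁻¹ * ((c*c) * conj (inner ℂ ((S.comp P) x) x : ℂ)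
            + (conj c * conj c) * inner ℂ ((P.comp S) x) x) := by
        rw [hKx, inner_smul_right, inner_add_right, inner_smul_right, inner_smul_right, h1, h2]
      have hiccQ : (conj c * conj c) * ((inner ℂ ((P.comp S) x) x : ℂ)
          + inner ℂ ((S.comp P) x) x) = (‖q‖ : ℂ) := by
        have harg : (‖q‖ : ℂ) * Complex.exp ((φ:ℝ) * Complex.I) = q := by
          rw [hφ]; exact Complex.norm_mul_exp_arg_mul_I q
        rw [← hq', ← map_mul, hc2, ← Complex.exp_conj]
        rw [show conj (((φ:ℝ):ℂ) * Complex.I) = -(((φ:ℝ):ℂ) * Complex.I) by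
          rw [map_mul, Complex.conj_ofReal, Complex.conj_I]; ring]
        conv_lhs => rw [← harg]
        rw [show Complex.exp (-(((φ:ℝ):ℂ) * Complex.I)) * ((‖q‖ : ℂ)
            * Complex.exp (((φ:ℝ):ℂ) * Complex.I))
          = (‖q‖ : ℂ) * (Complex.exp (-(((φ:ℝ):ℂ) * Complex.I))
            * Complex.exp (((φ:ℝ):ℂ) * Complex.I)) by ring]
        rw [← Complex.exp_add, neg_add_cancel, Complex.exp_zero, mul_one]
      have hicc2 := congrArg conj hiccQ
      simp only [map_mul, map_add, Complex.conj_conj, Complex.conj_ofReal] at hicc2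
      have hkey : (inner ℂ (S x) (K x) : ℂ) + inner ℂ (K x) (S x) = ((‖q‖ : ℝ) : ℂ) := by
        rw [← inner_conj_symm (K x) (S x), hA]
        rw [show conj ((2:ℂ)⁻¹ * ((c*c) * conj (inner ℂ ((S.comp P) x) x : ℂ)
            + (conj c * conj c) * inner ℂ ((P.comp S) x) x))
          = (2:ℂ)⁻¹ * ((conj c * conj c) * (inner ℂ ((S.comp P) x) x : ℂ)
            + (c * c) * conj (inner ℂ ((P.comp S) x) x : ℂ)) by
          simp only [map_mul, map_add, Complex.conj_conj,
            show conj ((2:ℂ)⁻¹) = (2:ℂ)⁻¹ by simp [Complex.ext_iff]]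
          try ring]
        linear_combination (2⁻¹:ℂ) * hiccQ + (2⁻¹:ℂ) * hicc2
      have hre : Complex.re (inner ℂ (S x) (K x) : ℂ) = ‖q‖ / 2 := by
        rw [← inner_conj_symm (K x) (S x)] at hkey
        have := congrArg Complex.re hkey
        simp only [Complex.add_re, Complex.conj_re, Complex.ofReal_re] at this
        linarith
      have hinner_ab : (inner ℂ ((4:ℂ)⁻¹ • S x) ((2:ℂ)⁻¹ • K x) : ℂ)
          = (8:ℂ)⁻¹ * inner ℂ (S x) (K x) := by
        rw [inner_smul_left, inner_smul_right,
          show conj ((4:ℂ)⁻¹) = (4:ℂ)⁻¹ by simp [Complex.ext_iff]]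
        ring
      have hre8 : RCLike.re ((8:ℂ)⁻¹ * (inner ℂ (S x) (K x) : ℂ)) = 8⁻¹ * (‖q‖/2) := by
        rw [show ((8:ℂ))⁻¹ = ((8⁻¹:ℝ):ℂ) by norm_num]
        rw [RCLike.re_to_complex, Complex.re_ofReal_mul, hre]
      have hexp : ‖(4:ℂ)⁻¹ • S x + (2:ℂ)⁻¹ • K x‖^2
          = (1/16)*‖S x‖^2 + (1/4)*‖K x‖^2 + (1/8)*‖q‖ := by
        rw [norm_add_sq (𝕜 := ℂ), hinner_ab, hre8,
          norm_smul, norm_smul, show ‖(4:ℂ)⁻¹‖ = (4:ℝ)⁻¹ by norm_num,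
          show ‖(2:ℂ)⁻¹‖ = (2:ℝ)⁻¹ by norm_num]
        ring
      have hKge : cNum P ≤ ‖K x‖ := by rw [hKdef]; exact cNum_le P φ hx
      have hQge : crawford Q ≤ ‖q‖ := by rw [hq]; exact crawford_le Q hx
      have hcN0 : 0 ≤ cNum P := cNum_nonneg P
      have hsq : ‖(4:ℂ)⁻¹ • S x + (2:ℂ)⁻¹ • K x‖^2 ≤ (numRadius T)^4 := by
        nlinarith [norm_nonneg ((4:ℂ)⁻¹ • S x + (2:ℂ)⁻¹ • K x), hnorm1, hw0]
      have hK2 : (cNum P)^2 ≤ ‖K x‖^2 := by nlinarith [hKge, hcN0]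
      rw [hexp] at hsq
      linarith
    -- conclude
    have hC0 : 0 ≤ (numRadius T)^4 - (1/4) * (cNum P)^2 - (1/8) * crawford Q := by
      have := hmain x₀ hx₀; nlinarith [sq_nonneg ‖S x₀‖]
    have hSx : ∀ x : H, ‖x‖ = 1 → ‖S x‖ ≤ Real.sqrt (16 * ((numRadius T)^4
        - (1/4) * (cNum P)^2 - (1/8) * crawford Q)) := by
      intro x hx
      have h := hmain x hx
      have h16 : ‖S x‖^2 ≤ 16 * ((numRadius T)^4
          - (1/4) * (cNum P)^2 - (1/8) * crawford Q) := by linarith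
      have := Real.sqrt_le_sqrt h16
      rwa [Real.sqrt_sq (norm_nonneg _)] at this
    have hSn : ‖S‖ ≤ Real.sqrt (16 * ((numRadius T)^4
        - (1/4) * (cNum P)^2 - (1/8) * crawford Q)) :=
      aux_opnorm_le_of_unit S (Real.sqrt_nonneg _) hSx
    have hS2 : ‖S‖^2 ≤ 16 * ((numRadius T)^4 - (1/4) * (cNum P)^2 - (1/8) * crawford Q) := by
      have h1 : ‖S‖^2 ≤ (Real.sqrt (16 * ((numRadius T)^4
          - (1/4) * (cNum P)^2 - (1/8) * crawford Q)))^2 := by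
        nlinarith [ContinuousLinearMap.opNorm_nonneg S, Real.sqrt_nonneg (16 * ((numRadius T)^4
          - (1/4) * (cNum P)^2 - (1/8) * crawford Q))]
      rwa [Real.sq_sqrt (by linarith : (0:ℝ) ≤ 16 * ((numRadius T)^4
        - (1/4) * (cNum P)^2 - (1/8) * crawford Q))] at h1
    have hb4 : (1/16 : ℝ) * ‖S‖^2 + (1/4) * (cNum P)^2 + (1/8) * crawford Q
        ≤ (numRadius T)^4 := by linarith
    have hb0 : 0 ≤ (1/16 : ℝ) * ‖S‖^2 + (1/4) * (cNum P)^2 + (1/8) * crawford Q := by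
      have h1 := crawford_nonneg Q
      have h2 := cNum_nonneg P
      positivity
    have hfinal3 : ((1/16 : ℝ) * ‖S‖^2 + (1/4) * (cNum P)^2 + (1/8) * crawford Q) ^ ((1:ℝ)/4)
        ≤ numRadius T := by
      have h1 : ((1/16 : ℝ) * ‖S‖^2 + (1/4) * (cNum P)^2 + (1/8) * crawford Q) ^ ((1:ℝ)/4)
          ≤ ((numRadius T)^4) ^ ((1:ℝ)/4) := Real.rpow_le_rpow hb0 hb4 (by norm_num)
      have heq : (((numRadius T)^4 : ℝ)) ^ ((1:ℝ)/4) = numRadius T := by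
        rw [show ((1:ℝ)/4) = (((4:ℕ)):ℝ)⁻¹ by norm_num]
        exact Real.pow_rpow_inv_natCast hw0 (by norm_num)
      exact h1.trans_eq heq
    rw [ge_iff_le, max_le_iff, max_le_iff]
    exact ⟨⟨hwX, hwW⟩, hfinal3⟩
  · have hzero : ∀ x : H, x = 0 := by
      intro x; by_contra hx
      exact hH ⟨‖x‖⁻¹ • x, norm_smul_inv_norm hx⟩
    have hSzero : S = 0 := by ext x; rw [hzero x]; simp
    have hXw : numRadius X = 0 := by
      rw [numRadius, Set.eq_empty_iff_forall_notMem.mpr (by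
        rintro r ⟨x, hx, -⟩; exact hH ⟨x, hx⟩ :
        ∀ r, r ∉ {r : ℝ | ∃ x : H, ‖x‖ = 1 ∧ r = ‖(inner ℂ (X x) x : ℂ)‖}), Real.sSup_empty]
    have hWw : numRadius W = 0 := by
      rw [numRadius, Set.eq_empty_iff_forall_notMem.mpr (by
        rintro r ⟨x, hx, -⟩; exact hH ⟨x, hx⟩ :
        ∀ r, r ∉ {r : ℝ | ∃ x : H, ‖x‖ = 1 ∧ r = ‖(inner ℂ (W x) x : ℂ)‖}), Real.sSup_empty]
    have hcr : crawford ((Z.comp Y).comp S + S.comp (Z.comp Y)) = 0 := by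
      rw [crawford, Set.eq_empty_iff_forall_notMem.mpr (by
        rintro r ⟨x, hx, -⟩; exact hH ⟨x, hx⟩ :
        ∀ r, r ∉ {r : ℝ | ∃ x : H, ‖x‖ = 1 ∧
          r = ‖(inner ℂ (((Z.comp Y).comp S + S.comp (Z.comp Y)) x) x : ℂ)‖}), Real.sInf_empty]
    have hcnum : cNum (Z.comp Y) = 0 := by
      rw [cNum]
      have hset : ∀ θ : ℝ, {r : ℝ | ∃ x : H, ‖x‖ = 1 ∧
          r = ‖reOp (Complex.exp (θ * Complex.I) • (Z.comp Y)) x‖} = ∅ := fun θ =>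
        Set.eq_empty_iff_forall_notMem.mpr (by rintro r ⟨x, hx, -⟩; exact hH ⟨x, hx⟩)
      simp only [hset, Real.sInf_empty]
      exact ciInf_const
    have hTw : numRadius T = 0 := by
      refine le_antisymm ?_ (numRadius_nonneg T)
      refine Real.sSup_le ?_ le_rfl
      rintro r ⟨ξ, hξ, rfl⟩
      exfalso
      have h1 : ξ.fst = (0:H) := hzero _
      have h2 : ξ.snd = (0:H) := hzero _
      have h3 : ‖ξ‖^2 = 0 := by rw [WithLp.prod_norm_sq_eq_of_L2, h1, h2]; simp
      rw [hξ] at h3; norm_num at h3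
    rw [ge_iff_le, hTw, hXw, hWw, hcnum, hcr, hSzero]
    norm_num [Real.zero_rpow]
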